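/- For every m ≥ 1, the flat torus T² can be covered by m sets each of diameter at most √(1/4 + 1/m²). -/

import Mathlib

open scoped Real Pointwise

/-- The Euclidean (flat) distance on the torus `T² = ℝ²/ℤ²`. -/
noncomputable def torusDist (u v : AddCircle (1:ℝ) × AddCircle (1:ℝ)) : ℝ :=
  Real.sqrt (‖u.1 - v.1‖ ^ 2 + ‖u.2 - v.2‖ ^ 2)

/-- The diameter of a subset of the flat torus. -/
noncomputable def torusDiam (F : Set (AddCircle (1:ℝ) × AddCircle (1:ℝ))) : ℝ :=
  sSup {d | ∃ u ∈ F, ∃ v ∈ F, d = torusDist u v}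

/-- `d_m(T²)`: infimum of the maximal diameter over coverings of `T²` by `m` sets. -/
noncomputable def dTor (m : ℕ) : ℝ :=
  sInf {τ | ∃ F : Fin m → Set (AddCircle (1:ℝ) × AddCircle (1:ℝ)),
    (⋃ i, F i) = Set.univ ∧ ∀ i, torusDiam (F i) ≤ τ}

/-- The vertical line (circle) `l_x = {x} × T¹` on the flat torus. -/
def vline (x : ℝ) : Set (AddCircle (1:ℝ) × AddCircle (1:ℝ)) :=
  {p | p.1 = (x : AddCircle (1:ℝ))}

theorem torus_cover_stripes (m : ℕ) (hm : 1 ≤ m) :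
    ∃ F : Fin m → Set (AddCircle (1:ℝ) × AddCircle (1:ℝ)),
      (⋃ i, F i) = Set.univ ∧
      ∀ i, torusDiam (F i) ≤ Real.sqrt (1/4 + 1/(m:ℝ)^2) := by
  have hm0 : (0:ℝ) < m := by exact_mod_cast hm
  refine ⟨fun i => {p | ∃ x ∈ Set.Icc ((i:ℝ)/m) (((i:ℝ)+1)/m),
      p.1 = (x : AddCircle (1:ℝ))}, ?_, ?_⟩
  · apply Set.eq_univ_of_forall
    intro p
    obtain ⟨x, hx⟩ := Quotient.exists_rep p.1
    rw [show Quotient.mk _ x = ((x:ℝ) : AddCircle (1:ℝ)) from rfl] at hx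
    set y := Int.fract x with hy
    have hy0 : 0 ≤ y := Int.fract_nonneg x
    have hy1 : y < 1 := Int.fract_lt_one x
    have hcoe : ((y : ℝ) : AddCircle (1:ℝ)) = p.1 := by
      have hz : (((⌊x⌋:ℝ)) : AddCircle (1:ℝ)) = 0 := by
        rw [AddCircle.coe_eq_zero_iff]; exact ⟨⌊x⌋, by simp⟩
      rw [← hx, hy, Int.fract, AddCircle.coe_sub, hz, sub_zero]
    have hfl : (0:ℤ) ≤ ⌊y * m⌋ := Int.floor_nonneg.2 (by positivity)
    have hfl2 : ⌊y * m⌋ < m := by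
      have : y * m < m := by nlinarith
      exact_mod_cast Int.floor_lt.2 (by exact_mod_cast this)
    have hcast : ((⌊y * (m:ℝ)⌋.toNat : ℕ) : ℝ) = ((⌊y * (m:ℝ)⌋ : ℤ) : ℝ) := by
      exact_mod_cast congrArg (fun z : ℤ => (z : ℝ)) (Int.toNat_of_nonneg hfl)
    refine Set.mem_iUnion.2 ⟨⟨⌊y * m⌋.toNat, by omega⟩, ⟨y, ⟨?_, ?_⟩, hcoe.symm⟩⟩
    · rw [div_le_iff₀ hm0]
      have := Int.floor_le (y * (m:ℝ))
      simp only [Fin.val_mk]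
      rw [hcast]; linarith
    · rw [le_div_iff₀ hm0]
      have := Int.lt_floor_add_one (y * (m:ℝ))
      simp only [Fin.val_mk]
      rw [hcast]; linarith
  · intro i
    apply Real.sSup_le
    · rintro d ⟨u, ⟨x₁, hx₁, hu⟩, v, ⟨x₂, hx₂, hv⟩, rfl⟩
      have h1 : ‖u.1 - v.1‖ ≤ 1 / m := by
        rw [hu, hv, ← AddCircle.coe_sub]
        refine le_trans QuotientAddGroup.norm_mk_le_norm ?_
        rw [Real.norm_eq_abs]
        rw [abs_sub_le_iff]
        constructor
        · have := hx₁.2; have := hx₂.1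
          have : x₁ - x₂ ≤ ((i:ℝ)+1)/m - (i:ℝ)/m := by linarith
          calc x₁ - x₂ ≤ ((i:ℝ)+1)/m - (i:ℝ)/m := this
            _ = 1/m := by ring
        · have := hx₂.2; have := hx₁.1
          have : x₂ - x₁ ≤ ((i:ℝ)+1)/m - (i:ℝ)/m := by linarith
          calc x₂ - x₁ ≤ ((i:ℝ)+1)/m - (i:ℝ)/m := this
            _ = 1/m := by ring
      have h2 : ‖u.2 - v.2‖ ≤ 1 / 2 := by
        have := AddCircle.norm_le_half_period (1:ℝ) (x := u.2 - v.2) one_ne_zero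
        simpa using this
      unfold torusDist
      apply Real.sqrt_le_sqrt
      have e1 : ‖u.1 - v.1‖ ^ 2 ≤ 1 / (m:ℝ)^2 := by
        have := sq_le_sq' (by linarith [norm_nonneg (u.1 - v.1)]) h1
        calc ‖u.1 - v.1‖ ^ 2 ≤ (1/(m:ℝ))^2 := this
          _ = 1/(m:ℝ)^2 := by ring
      have e2 : ‖u.2 - v.2‖ ^ 2 ≤ 1 / 4 := by
        have := sq_le_sq' (by linarith [norm_nonneg (u.2 - v.2)]) h2
        calc ‖u.2 - v.2‖ ^ 2 ≤ (1/2:ℝ)^2 := this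
          _ = 1/4 := by norm_num
      linarith
    · positivity
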